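/- There exist a constant K₁ > 2 and a positive constant C_{K₁,λ} such that for all x,y ∈ ℝ₊ with y > K₁·x, one has R_{Δ_λ}(x,y) ≥ C_{K₁,λ} · x / y^{2λ+2}. -/

import Mathlib

open MeasureTheory Real Set Filter

open Topology

set_option maxHeartbeats 1600000

/-- The Riesz kernel `R_{Δ_λ}(x,y)`. -/
noncomputable def rieszKernel (lam x y : ℝ) : ℝ :=
  -(2 * lam / π) * ∫ θ in (0:ℝ)..π,
    ((x - y * Real.cos θ) * Real.sin θ ^ (2*lam - 1)) /
      ((x^2 + y^2 - 2*x*y*Real.cos θ) ^ (lam + 1))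

lemma bern {p u v : ℝ} (hp : 1 ≤ p) (hu : 0 < u) (huv : u ≤ v) :
    p * (v - u) / v ^ (p + 1) ≤ 1 / u ^ p - 1 / v ^ p := by
  have hv : 0 < v := hu.trans_le huv
  have hUp : (0:ℝ) < u ^ p := Real.rpow_pos_of_pos hu p
  have hVp : (0:ℝ) < v ^ p := Real.rpow_pos_of_pos hv p
  have hb := one_add_mul_self_le_rpow_one_add (by
    have : (0:ℝ) ≤ (v-u)/u := div_nonneg (by linarith) hu.le
    linarith : (-1:ℝ) ≤ (v-u)/u) hp
  have h1 : (1 + (v - u)/u : ℝ) = v / u := by field_simp; ring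
  rw [h1, Real.div_rpow hv.le hu.le] at hb
  have h2 : 1 + p * ((v-u)/v) ≤ 1 + p * ((v-u)/u) := by
    have h4 : (v-u)/v ≤ (v-u)/u := div_le_div_of_nonneg_left (by linarith) hu huv
    nlinarith
  have h3 := h2.trans hb
  have h5 := mul_le_mul_of_nonneg_right h3 hv.le
  have h6 : (1 + p*((v-u)/v)) * v = v + p*(v-u) := by field_simp
  rw [h6] at h5
  -- h5 : v + p*(v-u) ≤ v^p/u^p * v
  have h7 : v ^ p / u ^ p * v = v ^ p * v / u ^ p := by ring
  rw [h7, ← ge_iff_le, ge_iff_le, le_div_iff₀ hUp] at h5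
  -- h5 : (v + p*(v-u)) * u^p ≤ v^p*v
  rw [Real.rpow_add_one hv.ne', div_le_iff₀ (by positivity)]
  have h9 : (1/u^p - 1/v^p) * (v^p*v) = v^p*v/u^p - v := by
    field_simp
  rw [h9]
  rw [le_sub_iff_add_le, ← le_div_iff₀ hUp] at *
  linarith

lemma sin_rpow_bound {q : ℝ} (hq : -1 < q) {θ : ℝ} (h0 : 0 ≤ θ) (h1 : θ ≤ π) :
    Real.sin θ ^ q ≤ (2/π)^q * θ^q + (2/π)^q * (π - θ)^q := by
  have hπ := Real.pi_pos
  have h2π : (0:ℝ) < 2/π := by positivity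
  have c1 : (0:ℝ) ≤ (2/π)^q * θ^q :=
    mul_nonneg (Real.rpow_nonneg h2π.le q) (Real.rpow_nonneg h0 q)
  have c2 : (0:ℝ) ≤ (2/π)^q * (π - θ)^q :=
    mul_nonneg (Real.rpow_nonneg h2π.le q) (Real.rpow_nonneg (by linarith) q)
  have e1 : ((2/π) * (π/2) : ℝ) = 1 := by field_simp
  rcases le_or_gt 0 q with hq0 | hq0
  · have hs : Real.sin θ ^ q ≤ 1 :=
      Real.rpow_le_one (Real.sin_nonneg_of_nonneg_of_le_pi h0 h1) (Real.sin_le_one θ) hq0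
    rcases le_or_gt θ (π/2) with hh | hh
    · have k1 : (1:ℝ) ≤ (2/π)^q * (π - θ)^q := by
        calc (1:ℝ) = ((2/π) * (π/2))^q := by rw [e1, Real.one_rpow]
          _ = (2/π)^q * (π/2)^q := Real.mul_rpow h2π.le (by linarith)
          _ ≤ (2/π)^q * (π-θ)^q := by
              apply mul_le_mul_of_nonneg_left _ (Real.rpow_nonneg h2π.le q)
              exact Real.rpow_le_rpow (by linarith) (by linarith) hq0
      linarith
    · have k1 : (1:ℝ) ≤ (2/π)^q * θ^q := by
        calc (1:ℝ) = ((2/π) * (π/2))^q := by rw [e1, Real.one_rpow]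
          _ = (2/π)^q * (π/2)^q := Real.mul_rpow h2π.le (by linarith)
          _ ≤ (2/π)^q * θ^q := by
              apply mul_le_mul_of_nonneg_left _ (Real.rpow_nonneg h2π.le q)
              exact Real.rpow_le_rpow (by linarith) (by linarith) hq0
      linarith
  · rcases eq_or_lt_of_le h0 with rfl | h0'
    · rw [Real.sin_zero, Real.zero_rpow (by linarith : q ≠ 0)]
      linarith
    rcases eq_or_lt_of_le h1 with rfl | h1'
    · rw [Real.sin_pi, Real.zero_rpow (by linarith : q ≠ 0)]
      linarith
    rcases le_or_gt θ (π/2) with hh | hh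
    · have hsin : (2/π) * θ ≤ Real.sin θ := Real.mul_le_sin h0 hh
      have hb : Real.sin θ ^ q ≤ ((2/π) * θ)^q :=
        Real.rpow_le_rpow_of_nonpos (by positivity) hsin hq0.le
      rw [Real.mul_rpow h2π.le h0] at hb
      linarith
    · have hsin : (2/π) * (π - θ) ≤ Real.sin θ := by
        rw [← Real.sin_pi_sub]
        exact Real.mul_le_sin (by linarith) (by linarith)
      have hb : Real.sin θ ^ q ≤ ((2/π) * (π - θ))^q :=
        Real.rpow_le_rpow_of_nonpos (mul_pos h2π (by linarith)) hsin hq0.le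
      rw [Real.mul_rpow h2π.le (by linarith)] at hb
      linarith

lemma wInt {lam : ℝ} (hlam : 0 < lam) :
    IntervalIntegrable (fun θ => Real.sin θ ^ (2*lam - 1)) volume 0 π := by
  have hπ := Real.pi_pos
  have hq1 : (-1:ℝ) < 2*lam - 1 := by linarith
  set q := 2*lam - 1 with hqdef
  have hg1 : IntervalIntegrable (fun θ : ℝ => θ ^ q) volume 0 π :=
    intervalIntegral.intervalIntegrable_rpow' hq1
  have hg2 : IntervalIntegrable (fun θ : ℝ => (π - θ) ^ q) volume 0 π := by
    have := hg1.comp_sub_left π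
    simpa using this.symm
  have hg : IntervalIntegrable (fun θ : ℝ => (2/π)^q * θ^q + (2/π)^q * (π-θ)^q) volume 0 π :=
    (hg1.const_mul _).add (hg2.const_mul _)
  apply hg.mono_fun
  · apply Measurable.aestronglyMeasurable
    measurability
  · rw [Filter.EventuallyLE, ae_restrict_iff' measurableSet_uIoc]
    filter_upwards with θ hθ
    rw [Set.uIoc_of_le hπ.le] at hθ
    have h0 : 0 ≤ θ := hθ.1.le
    have h1 : θ ≤ π := hθ.2
    have h2π : (0:ℝ) < 2/π := by positivity
    have hb := sin_rpow_bound hq1 h0 h1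
    have hnn : 0 ≤ Real.sin θ ^ q := Real.rpow_nonneg (Real.sin_nonneg_of_nonneg_of_le_pi h0 h1) q
    have c1 : (0:ℝ) ≤ (2/π)^q * θ^q :=
      mul_nonneg (Real.rpow_nonneg h2π.le q) (Real.rpow_nonneg h0 q)
    have c2 : (0:ℝ) ≤ (2/π)^q * (π - θ)^q :=
      mul_nonneg (Real.rpow_nonneg h2π.le q) (Real.rpow_nonneg (by linarith) q)
    simp only [Real.norm_eq_abs]
    rw [abs_of_nonneg hnn, abs_of_nonneg (by linarith)]
    exact hb


lemma core_ineq {lam K x y c : ℝ} (hlam : 0 < lam) (hK : 2 < K) (hx : 0 < x) (hy : 0 < y)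
    (hxy : K * x < y) (hc0 : 0 ≤ c) (hc1 : c ≤ 1) :
    (x - y*c) / ((x^2 + y^2 - 2*x*y*c) ^ (lam+1)) + (x + y*c) / ((x^2 + y^2 + 2*x*y*c) ^ (lam+1))
      ≤ x / y^(2*lam+2) *
        (2*(1 - 2/K)^(-(lam+1)) - 4*(lam+1)*((1 + 1/K)^2)^(-(lam+2))*c^2) := by
  have hK0 : (0:ℝ) < K := by linarith
  have hκ : (0:ℝ) < 1 - 2/K := by
    rw [sub_pos, div_lt_one hK0]; exact hK
  have hxyK : x < y / K := by rwa [lt_div_iff₀ hK0, mul_comm]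
  have hxy' : x < y := by nlinarith
  have hxynn : (0:ℝ) ≤ 2*x*y := by positivity
  set p := lam + 1 with hp
  have hp1 : (1:ℝ) ≤ p := by rw [hp]; linarith
  set u := x^2 + y^2 - 2*x*y*c with hu
  set v := x^2 + y^2 + 2*x*y*c with hv
  have hc2 : 2*x*y*c ≤ 2*x*y := by nlinarith
  have hulb : (1 - 2/K) * y^2 ≤ u := by
    have h3 : 2*x*y ≤ 2*(y/K)*y := by nlinarith
    have h4 : (2/K) * y^2 = 2*(y/K)*y := by ring
    rw [hu]; nlinarith
  have hupos : 0 < u := lt_of_lt_of_le (by positivity) hulb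
  have huv : u ≤ v := by rw [hu, hv]; nlinarith [mul_nonneg hxynn hc0]
  have hvpos : 0 < v := hupos.trans_le huv
  have hμ : (0:ℝ) < (1 + 1/K)^2 := by positivity
  have hvub : v ≤ (1 + 1/K)^2 * y^2 := by
    have h1 : v ≤ (x + y)^2 := by rw [hv]; nlinarith [mul_nonneg hxynn hc0]
    have hs : x + y ≤ (1 + 1/K) * y := by
      have e : (1 + 1/K) * y = y + y/K := by ring
      linarith
    have h2 : (x + y)^2 ≤ ((1 + 1/K) * y)^2 := by nlinarith
    nlinarith
  set T := y ^ (2*lam + 2) with hT'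
  have hT : (0:ℝ) < T := Real.rpow_pos_of_pos hy _
  have hup : (0:ℝ) < u ^ p := Real.rpow_pos_of_pos hupos p
  have hvp : (0:ℝ) < v ^ p := Real.rpow_pos_of_pos hvpos p
  set a' := (1 - 2/K)^(-(lam+1)) with ha'
  set b' := ((1 + 1/K)^2)^(-(lam+2)) with hb'
  have ha'pos : 0 < a' := Real.rpow_pos_of_pos hκ _
  have hb'pos : 0 < b' := Real.rpow_pos_of_pos hμ _
  have hy2p : (y^2 : ℝ) ^ p = T := by
    rw [hT', ← Real.rpow_natCast y 2, ← Real.rpow_mul hy.le]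
    congr 1
    rw [hp]; push_cast; ring
  -- step B
  have stepB : 1/u^p ≤ a'/T := by
    have hBp : (0:ℝ) < (1 - 2/K)^p := Real.rpow_pos_of_pos hκ p
    have hY2 : ((1 - 2/K) * y^2) ^ p ≤ u ^ p :=
      Real.rpow_le_rpow (mul_nonneg hκ.le (sq_nonneg y)) hulb (by linarith)
    rw [Real.mul_rpow hκ.le (sq_nonneg y), hy2p] at hY2
    have h5 := one_div_le_one_div_of_le (mul_pos hBp hT) hY2
    rw [ha', Real.rpow_neg hκ.le, hp]
    calc 1/u^p ≤ 1/((1 - 2/K)^p * T) := h5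
      _ = ((1 - 2/K)^(lam+1))⁻¹ / T := by rw [hp]; ring
  have stepA : 1/v^p ≤ 1/u^p :=
    one_div_le_one_div_of_le hup (Real.rpow_le_rpow hupos.le huv (by linarith))
  -- step C
  have hvu : v - u = 4*(x*y*c) := by rw [hu, hv]; ring
  have hy2T : y ^ (2*lam + 4) = T * y^2 := by
    rw [hT', ← Real.rpow_natCast y 2, ← Real.rpow_add hy]
    congr 1
    push_cast; ring
  have hvpow : v^(p+1) ≤ ((1+1/K)^2)^(lam+2) * (T * y^2) := by
    have h1 : v^(p+1) ≤ ((1 + 1/K)^2 * y^2)^(p+1) :=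
      Real.rpow_le_rpow hvpos.le hvub (by linarith)
    rw [Real.mul_rpow hμ.le (by positivity)] at h1
    have h2 : (y^2 : ℝ)^(p+1) = y^(2*lam+4) := by
      rw [← Real.rpow_natCast y 2, ← Real.rpow_mul hy.le]
      congr 1
      rw [hp]; push_cast; ring
    have h3 : ((1 + 1/K)^2 : ℝ)^(p+1) = ((1 + 1/K)^2)^(lam+2) := by
      congr 1
      rw [hp]; ring
    rw [h2, hy2T, h3] at h1
    exact h1
  have hvp1 : (0:ℝ) < v^(p+1) := Real.rpow_pos_of_pos hvpos _
  have hbern := bern hp1 hupos huv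
  have hb'inv : b' = (((1+1/K)^2)^(lam+2))⁻¹ := by
    rw [hb', Real.rpow_neg hμ.le]
  have stepC : 4*p*x*c^2*b'/T ≤ y*c*(1/u^p - 1/v^p) := by
    have hμpow : (0:ℝ) < ((1+1/K)^2)^(lam+2) := Real.rpow_pos_of_pos hμ _
    have k1 : 4*p*x*c^2*b'/T = (4*p*(x*y^2*c^2)) * (1/(((1+1/K)^2)^(lam+2) * (T*y^2))) := by
      rw [hb'inv]; field_simp
    have k2 : (1:ℝ)/(((1+1/K)^2)^(lam+2) * (T*y^2)) ≤ 1/v^(p+1) :=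
      one_div_le_one_div_of_le hvp1 hvpow
    have k3 : (4*p*(x*y^2*c^2)) * (1/(((1+1/K)^2)^(lam+2) * (T*y^2)))
        ≤ (4*p*(x*y^2*c^2)) * (1/v^(p+1)) := by
      apply mul_le_mul_of_nonneg_left k2 (by positivity)
    have k4 : (4*p*(x*y^2*c^2)) * (1/v^(p+1)) = y*c*(p*(v-u)/v^(p+1)) := by
      rw [hvu]; ring
    have k5 : y*c*(p*(v-u)/v^(p+1)) ≤ y*c*(1/u^p - 1/v^p) :=
      mul_le_mul_of_nonneg_left hbern (by positivity)
    rw [k1]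
    exact le_trans k3 (le_trans (le_of_eq k4) k5)
  -- combine
  have hx1 : x*(1/u^p) ≤ x*(a'/T) := mul_le_mul_of_nonneg_left stepB hx.le
  have hx2 : x*(1/v^p) ≤ x*(a'/T) := mul_le_mul_of_nonneg_left (stepA.trans stepB) hx.le
  have eL : (x - y*c)/u^p + (x + y*c)/v^p
      = x*(1/u^p) + x*(1/v^p) - y*c*(1/u^p - 1/v^p) := by ring
  have eR : x/T*(2*a' - 4*p*b'*c^2) = x*(a'/T) + x*(a'/T) - 4*p*x*c^2*b'/T := by ring
  rw [eL]
  calc x*(1/u^p) + x*(1/v^p) - y*c*(1/u^p - 1/v^p)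
      ≤ x*(a'/T) + x*(a'/T) - 4*p*x*c^2*b'/T := by linarith
    _ = x/T*(2*a' - 4*p*b'*c^2) := eR.symm


lemma fInt {lam x y : ℝ} (hlam : 0 < lam) (hx : 0 < x) (hy : 0 < y) (hxy : x < y) :
    IntervalIntegrable (fun θ => (x - y*Real.cos θ) * Real.sin θ ^ (2*lam-1) /
      ((x^2 + y^2 - 2*x*y*Real.cos θ) ^ (lam+1))) volume 0 π := by
  have hπ := Real.pi_pos
  have hD : ∀ θ : ℝ, (y-x)^2 ≤ x^2 + y^2 - 2*x*y*Real.cos θ := fun θ => by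
    nlinarith [Real.cos_le_one θ, mul_pos hx hy]
  have hyx0 : (0:ℝ) < y - x := by linarith
  have hyx : (0:ℝ) < (y - x)^2 := by positivity
  have hDpos : ∀ θ : ℝ, 0 < x^2 + y^2 - 2*x*y*Real.cos θ := fun θ =>
    lt_of_lt_of_le hyx (hD θ)
  have hyxp : (0:ℝ) < ((y-x)^2) ^ (lam+1) := Real.rpow_pos_of_pos hyx _
  set M := (x + y) / ((y - x)^2) ^ (lam+1) with hM
  have hM0 : 0 ≤ M := by positivity
  apply ((wInt hlam).const_mul M).mono_fun
  · apply Measurable.aestronglyMeasurable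
    measurability
  · rw [Filter.EventuallyLE, ae_restrict_iff' measurableSet_uIoc]
    filter_upwards with θ hθ
    rw [Set.uIoc_of_le hπ.le] at hθ
    have hw : 0 ≤ Real.sin θ ^ (2*lam-1) :=
      Real.rpow_nonneg (Real.sin_nonneg_of_nonneg_of_le_pi hθ.1.le hθ.2) _
    have hDp : (0:ℝ) < (x^2 + y^2 - 2*x*y*Real.cos θ) ^ (lam+1) :=
      Real.rpow_pos_of_pos (hDpos θ) _
    have hnum : |x - y*Real.cos θ| ≤ x + y := by
      have h1 := Real.cos_le_one θ
      have h2 := Real.neg_one_le_cos θ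
      rw [abs_le]; constructor <;> nlinarith
    have hden : ((y-x)^2) ^ (lam+1) ≤ (x^2 + y^2 - 2*x*y*Real.cos θ) ^ (lam+1) :=
      Real.rpow_le_rpow hyx.le (hD θ) (by linarith)
    simp only [Real.norm_eq_abs]
    rw [abs_div, abs_mul, abs_of_nonneg hw, abs_of_pos hDp,
      abs_of_nonneg (mul_nonneg hM0 hw)]
    calc |x - y*Real.cos θ| * Real.sin θ ^ (2*lam-1) / (x^2 + y^2 - 2*x*y*Real.cos θ) ^ (lam+1)
        ≤ (x + y) * Real.sin θ ^ (2*lam-1) / ((y-x)^2) ^ (lam+1) := by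
          apply div_le_div₀ (by positivity) (mul_le_mul_of_nonneg_right hnum hw) hyxp hden
      _ = M * Real.sin θ ^ (2*lam-1) := by rw [hM]; ring


lemma wHalfInt {lam : ℝ} (hlam : 0 < lam) :
    IntervalIntegrable (fun θ => Real.sin θ ^ (2*lam - 1)) volume 0 (π/2) := by
  apply (wInt hlam).mono_set
  rw [uIcc_of_le (by positivity : (0:ℝ) ≤ π/2), uIcc_of_le Real.pi_pos.le]
  exact Icc_subset_Icc le_rfl (by linarith [Real.pi_pos])

lemma wc2Int {lam : ℝ} (hlam : 0 < lam) :
    IntervalIntegrable (fun θ => Real.sin θ ^ (2*lam - 1) * Real.cos θ ^ 2) volume 0 (π/2) := by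
  apply (wHalfInt hlam).mono_fun
  · apply Measurable.aestronglyMeasurable; measurability
  · rw [Filter.EventuallyLE, ae_restrict_iff' measurableSet_uIoc]
    filter_upwards with θ hθ
    rw [Set.uIoc_of_le (by positivity : (0:ℝ) ≤ π/2)] at hθ
    have hs : 0 ≤ Real.sin θ :=
      Real.sin_nonneg_of_nonneg_of_le_pi hθ.1.le (by linarith [hθ.2, Real.pi_pos])
    have hw : 0 ≤ Real.sin θ ^ (2*lam-1) := Real.rpow_nonneg hs _
    have hc := Real.cos_sq_le_one θ
    have hc0 : (0:ℝ) ≤ Real.cos θ ^ 2 := sq_nonneg _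
    simp only [Real.norm_eq_abs]
    rw [abs_mul, abs_of_nonneg hw, abs_of_nonneg hc0]
    nlinarith
lemma spInt {lam : ℝ} (hlam : 0 < lam) :
    IntervalIntegrable (fun θ => Real.sin θ ^ (2*lam + 1)) volume 0 (π/2) := by
  apply (wHalfInt hlam).mono_fun
  · apply Measurable.aestronglyMeasurable; measurability
  · rw [Filter.EventuallyLE, ae_restrict_iff' measurableSet_uIoc]
    filter_upwards with θ hθ
    rw [Set.uIoc_of_le (by positivity : (0:ℝ) ≤ π/2)] at hθ
    have hs : 0 < Real.sin θ :=
      Real.sin_pos_of_pos_of_lt_pi hθ.1 (by linarith [hθ.2, Real.pi_pos])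
    have hs1 := Real.sin_le_one θ
    simp only [Real.norm_eq_abs]
    rw [abs_of_nonneg (Real.rpow_nonneg hs.le _), abs_of_nonneg (Real.rpow_nonneg hs.le _)]
    exact Real.rpow_le_rpow_of_exponent_ge hs hs1 (by linarith)

lemma ftc_id {lam : ℝ} (hlam : 0 < lam) :
    (2*lam + 1) * ∫ θ in (0:ℝ)..(π/2), Real.sin θ ^ (2*lam - 1) * Real.cos θ ^ 2
      = ∫ θ in (0:ℝ)..(π/2), Real.sin θ ^ (2*lam - 1) := by
  have hπ := Real.pi_pos
  set g : ℝ → ℝ := fun θ =>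
    2*lam * (Real.sin θ ^ (2*lam - 1) * Real.cos θ ^ 2) - Real.sin θ ^ (2*lam + 1) with hg
  have hgInt : IntervalIntegrable g volume 0 (π/2) :=
    ((wc2Int hlam).const_mul (2*lam)).sub (spInt hlam)
  -- via FTC on [ε, π/2] and ε → 0 : ∫ g = 0
  have hC : ∫ θ in (0:ℝ)..(π/2), g θ = 0 := by
    set C := ∫ θ in (0:ℝ)..(π/2), g θ with hCdef
    set F : ℝ → ℝ := fun t => ∫ s in (0:ℝ)..t, g s with hF
    have key : ∀ ε ∈ Ioo (0:ℝ) (π/2), C - F ε = -(Real.cos ε * Real.sin ε ^ (2*lam)) := by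
      intro ε hε
      have hsub : uIcc ε (π/2) ⊆ uIcc 0 (π/2) := by
        rw [uIcc_of_le hε.2.le, uIcc_of_le (by positivity)]
        exact Icc_subset_Icc hε.1.le le_rfl
      have hmono : IntervalIntegrable g volume ε (π/2) := hgInt.mono_set hsub
      have hderiv : ∀ θ ∈ uIcc ε (π/2),
          HasDerivAt (fun t => Real.cos t * Real.sin t ^ (2*lam)) (g θ) θ := by
        intro θ hθ
        rw [uIcc_of_le hε.2.le] at hθ
        have hsin : 0 < Real.sin θ :=
          Real.sin_pos_of_pos_of_lt_pi (lt_of_lt_of_le hε.1 hθ.1)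
            (lt_of_le_of_lt hθ.2 (by linarith))
        have h1 : HasDerivAt (fun t => Real.sin t ^ (2*lam))
            (Real.cos θ * (2*lam) * Real.sin θ ^ (2*lam - 1)) θ :=
          (Real.hasDerivAt_sin θ).rpow_const (Or.inl hsin.ne')
        have h2 : HasDerivAt (fun t => Real.cos t * Real.sin t ^ (2*lam)) _ θ :=
          (Real.hasDerivAt_cos θ).mul h1
        convert h2 using 1
        show 2*lam * (Real.sin θ ^ (2*lam - 1) * Real.cos θ ^ 2) - Real.sin θ ^ (2*lam + 1) = _
        have e1 : Real.sin θ ^ (2*lam + 1) = Real.sin θ ^ (2*lam) * Real.sin θ :=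
          Real.rpow_add_one hsin.ne' (2*lam)
        rw [e1]
        ring
      have hftc := intervalIntegral.integral_eq_sub_of_hasDerivAt hderiv hmono
      have hsplit : F ε + ∫ θ in ε..(π/2), g θ = C :=
        intervalIntegral.integral_add_adjacent_intervals
          (hgInt.mono_set (by
            rw [uIcc_of_le hε.1.le, uIcc_of_le (by positivity)]
            exact Icc_subset_Icc le_rfl hε.2.le)) hmono
      rw [hftc] at hsplit
      rw [← hsplit]
      simp [Real.cos_pi_div_two]
    -- limits
    have hIoo : Ioi (0:ℝ) ∩ Iio (π/2) = Ioo 0 (π/2) := Ioi_inter_Iio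
    have hne : (𝓝[Ioo (0:ℝ) (π/2)] (0:ℝ)).NeBot := by
      rw [← hIoo, ← nhdsWithin_restrict' (Ioi (0:ℝ)) (Iio_mem_nhds (by positivity))]
      infer_instance
    have hmem : (0:ℝ) ∈ uIcc (0:ℝ) (π/2) := left_mem_uIcc
    have hcont : ContinuousOn F (uIcc (0:ℝ) (π/2)) :=
      intervalIntegral.continuousOn_primitive_interval ((intervalIntegrable_iff' (by finiteness)).mp hgInt)
    have hsubIoo : Ioo (0:ℝ) (π/2) ⊆ uIcc (0:ℝ) (π/2) := by
      rw [uIcc_of_le (by positivity)]; exact Ioo_subset_Icc_self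
    have h1 : Tendsto F (𝓝[Ioo (0:ℝ) (π/2)] 0) (𝓝 0) := by
      have := (hcont 0 hmem).tendsto
      have h0 : F 0 = 0 := intervalIntegral.integral_same
      rw [h0] at this
      exact this.mono_left (nhdsWithin_mono _ hsubIoo)
    have h2 : Tendsto (fun ε => C - F ε) (𝓝[Ioo (0:ℝ) (π/2)] 0) (𝓝 C) := by
      simpa using (tendsto_const_nhds (x := C)).sub h1
    have h3 : Tendsto (fun ε => -(Real.cos ε * Real.sin ε ^ (2*lam)))
        (𝓝[Ioo (0:ℝ) (π/2)] 0) (𝓝 0) := by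
      have hsin0 : Tendsto (fun ε : ℝ => Real.sin ε) (𝓝 0) (𝓝 0) := by
        simpa using Real.continuous_sin.tendsto 0
      have hrpow : Tendsto (fun x : ℝ => x ^ (2*lam)) (𝓝 0) (𝓝 0) := by
        have := (Real.continuousAt_rpow_const 0 (2*lam) (Or.inr (by linarith))).tendsto
        rwa [Real.zero_rpow (by linarith : 2*lam ≠ 0)] at this
      have hcomp : Tendsto (fun ε : ℝ => Real.sin ε ^ (2*lam)) (𝓝 0) (𝓝 0) :=
        hrpow.comp hsin0
      have hcos : Tendsto (fun ε : ℝ => Real.cos ε) (𝓝 0) (𝓝 1) := by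
        simpa using Real.continuous_cos.tendsto 0
      have := (hcos.mul hcomp).neg
      simpa using this.mono_left nhdsWithin_le_nhds
    have heq : (fun ε => C - F ε) =ᶠ[𝓝[Ioo (0:ℝ) (π/2)] 0]
        (fun ε => -(Real.cos ε * Real.sin ε ^ (2*lam))) := by
      filter_upwards [self_mem_nhdsWithin] with ε hε
      exact key ε hε
    have := tendsto_nhds_unique (h2.congr' heq) h3
    exact this
  -- use hC
  have e2 : ∫ θ in (0:ℝ)..(π/2), Real.sin θ ^ (2*lam + 1)
      = (∫ θ in (0:ℝ)..(π/2), Real.sin θ ^ (2*lam - 1))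
        - ∫ θ in (0:ℝ)..(π/2), Real.sin θ ^ (2*lam - 1) * Real.cos θ ^ 2 := by
    rw [← intervalIntegral.integral_sub (wHalfInt hlam) (wc2Int hlam)]
    apply intervalIntegral.integral_congr
    intro θ hθ
    rw [uIcc_of_le (by positivity : (0:ℝ) ≤ π/2)] at hθ
    rcases eq_or_lt_of_le hθ.1 with rfl | hθ0
    · simp [Real.sin_zero, Real.zero_rpow (by linarith : 2*lam + 1 ≠ 0), Real.cos_zero]
    · have hsin : 0 < Real.sin θ :=
        Real.sin_pos_of_pos_of_lt_pi hθ0 (by linarith [hθ.2])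
      have e3 : Real.sin θ ^ (2*lam + 1)
          = Real.sin θ ^ (2*lam - 1) * Real.sin θ ^ (2:ℕ) := by
        rw [← Real.rpow_natCast (Real.sin θ) 2, ← Real.rpow_add hsin]
        congr 1
        push_cast; ring
      simp only []
      rw [e3]
      have h4 := Real.sin_sq_add_cos_sq θ
      linear_combination (Real.sin θ ^ (2*lam-1)) * h4
  have hgval : ∫ θ in (0:ℝ)..(π/2), g θ
      = 2*lam * (∫ θ in (0:ℝ)..(π/2), Real.sin θ ^ (2*lam - 1) * Real.cos θ ^ 2)
        - ∫ θ in (0:ℝ)..(π/2), Real.sin θ ^ (2*lam + 1) := by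
    rw [hg, intervalIntegral.integral_sub (((wc2Int hlam)).const_mul (2*lam)) (spInt hlam),
      intervalIntegral.integral_const_mul]
  rw [hC] at hgval
  rw [e2] at hgval
  linarith

lemma Kexists {lam : ℝ} (hlam : 0 < lam) :
    ∃ K : ℝ, 2 < K ∧
      2*(1 - 2/K)^(-(lam+1)) < 4*(lam+1)*((1 + 1/K)^2)^(-(lam+2))/(2*lam+1) := by
  have hinv : Tendsto (fun K : ℝ => 1/K) atTop (𝓝 0) := by
    simpa using tendsto_inv_atTop_zero
  have ha : Tendsto (fun K : ℝ => 1 - 2/K) atTop (𝓝 1) := by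
    have h2 : Tendsto (fun K : ℝ => 2/K) atTop (𝓝 0) := by
      have := hinv.const_mul (2:ℝ)
      simpa [div_eq_mul_inv, mul_comm] using this
    simpa using (tendsto_const_nhds (x := (1:ℝ))).sub h2
  have haP : Tendsto (fun K : ℝ => (1 - 2/K)^(-(lam+1))) atTop (𝓝 1) := by
    have := ha.rpow_const (p := -(lam+1)) (Or.inl one_ne_zero)
    simpa using this
  have hb : Tendsto (fun K : ℝ => (1 + 1/K)^2) atTop (𝓝 1) := by
    have h1 : Tendsto (fun K : ℝ => 1 + 1/K) atTop (𝓝 1) := by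
      simpa using (tendsto_const_nhds (x := (1:ℝ))).add hinv
    have := h1.mul h1
    simpa [sq] using this
  have hbP : Tendsto (fun K : ℝ => ((1 + 1/K)^2)^(-(lam+2))) atTop (𝓝 1) := by
    have := hb.rpow_const (p := -(lam+2)) (Or.inl one_ne_zero)
    simpa using this
  have hF : Tendsto
      (fun K : ℝ => 4*(lam+1)*((1 + 1/K)^2)^(-(lam+2))/(2*lam+1) - 2*(1 - 2/K)^(-(lam+1)))
      atTop (𝓝 (4*(lam+1)*1/(2*lam+1) - 2*1)) := by
    exact ((hbP.const_mul (4*(lam+1))).div_const (2*lam+1)).sub (haP.const_mul 2)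
  have hpos : (0:ℝ) < 4*(lam+1)*1/(2*lam+1) - 2*1 := by
    rw [mul_one, mul_one]
    have h1 : (0:ℝ) < 2*lam+1 := by linarith
    rw [div_sub' h1.ne', lt_div_iff₀ h1]
    ring_nf
    nlinarith
  have hev := (hF.eventually_const_lt hpos).and (eventually_gt_atTop (2:ℝ))
  obtain ⟨K, h1, h2⟩ := hev.exists
  exact ⟨K, h2, by linarith⟩

lemma I0pos {lam : ℝ} (hlam : 0 < lam)
    (hInt : IntervalIntegrable (fun θ => Real.sin θ ^ (2*lam - 1)) volume 0 (π/2)) :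
    0 < ∫ θ in (0:ℝ)..(π/2), Real.sin θ ^ (2*lam - 1) := by
  apply intervalIntegral.intervalIntegral_pos_of_pos_on hInt _ (by positivity)
  intro θ hθ
  have hs : 0 < Real.sin θ :=
    Real.sin_pos_of_pos_of_lt_pi hθ.1 (by linarith [hθ.2, Real.pi_pos])
  exact Real.rpow_pos_of_pos hs _

/-- Lower bound: there exist `K₁ > 2` and `C > 0` such that for `y > K₁ x`,
`R_{Δ_λ}(x,y) ≥ C x / y^{2λ+2}`. -/
theorem riesz_kernel_lower_bound_far (lam : ℝ) (hlam : 0 < lam) :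
    ∃ K₁ C : ℝ, 2 < K₁ ∧ 0 < C ∧ ∀ x y : ℝ, 0 < x → 0 < y → K₁ * x < y →
      C * x / y ^ (2*lam + 2) ≤ rieszKernel lam x y := by
  obtain ⟨K, hK2, hKcond⟩ := Kexists hlam
  have hπ := Real.pi_pos
  have hK0 : (0:ℝ) < K := by linarith
  have hκ : (0:ℝ) < 1 - 2/K := by rw [sub_pos, div_lt_one hK0]; exact hK2
  have hμ : (0:ℝ) < (1 + 1/K)^2 := by positivity
  set a' := (1 - 2/K)^(-(lam+1)) with ha'
  set b' := ((1 + 1/K)^2)^(-(lam+2)) with hb'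
  have ha'pos : 0 < a' := Real.rpow_pos_of_pos hκ _
  have hb'pos : 0 < b' := Real.rpow_pos_of_pos hμ _
  set I₀ := ∫ θ in (0:ℝ)..(π/2), Real.sin θ ^ (2*lam - 1) with hI0def
  set I₂ := ∫ θ in (0:ℝ)..(π/2), Real.sin θ ^ (2*lam - 1) * Real.cos θ ^ 2 with hI2def
  have hI0pos : 0 < I₀ := I0pos hlam (wHalfInt hlam)
  have hftc : (2*lam + 1) * I₂ = I₀ := ftc_id hlam
  have h2l1 : (0:ℝ) < 2*lam + 1 := by linarith
  have hI2val : I₂ = I₀ / (2*lam + 1) := by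
    rw [eq_div_iff h2l1.ne']; linarith
  set δ := 4*(lam+1)*b'/(2*lam+1) - 2*a' with hδdef
  have hδpos : 0 < δ := by rw [hδdef]; linarith
  refine ⟨K, 2*lam/π * (I₀ * δ), hK2, by positivity, ?_⟩
  intro x y hx hy hKxy
  have hxy' : x < y := by nlinarith
  set f : ℝ → ℝ := fun θ => (x - y*Real.cos θ) * Real.sin θ ^ (2*lam-1) /
      ((x^2 + y^2 - 2*x*y*Real.cos θ) ^ (lam+1)) with hfdef
  have hfi : IntervalIntegrable f volume 0 π := fInt hlam hx hy hxy'
  have h1 : IntervalIntegrable f volume 0 (π/2) := hfi.mono_set (by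
    rw [uIcc_of_le (by positivity : (0:ℝ) ≤ π/2), uIcc_of_le hπ.le]
    exact Icc_subset_Icc le_rfl (by linarith))
  have h2 : IntervalIntegrable f volume (π/2) π := hfi.mono_set (by
    rw [uIcc_of_le (by linarith : π/2 ≤ π), uIcc_of_le hπ.le]
    exact Icc_subset_Icc (by positivity) le_rfl)
  have hrefl : IntervalIntegrable (fun θ => f (π - θ)) volume 0 (π/2) := by
    have h3 := h2.comp_sub_left π
    rw [show π - π/2 = π/2 by ring, show π - π = (0:ℝ) by ring] at h3
    exact h3.symm
  have hsplit : (∫ θ in (0:ℝ)..π, f θ)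
      = (∫ θ in (0:ℝ)..(π/2), f θ) + ∫ θ in (π/2)..π, f θ :=
    (intervalIntegral.integral_add_adjacent_intervals h1 h2).symm
  have hreflid : (∫ θ in (0:ℝ)..(π/2), f (π - θ)) = ∫ θ in (π/2)..π, f θ := by
    have h4 := intervalIntegral.integral_comp_sub_left (a := 0) (b := π/2) f π
    rw [show π - π/2 = π/2 by ring, show π - (0:ℝ) = π by ring] at h4
    exact h4
  have hsum : (∫ θ in (0:ℝ)..π, f θ)
      = ∫ θ in (0:ℝ)..(π/2), (f θ + f (π - θ)) := by
    rw [intervalIntegral.integral_add h1 hrefl, hsplit, hreflid]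
  set T := y ^ (2*lam + 2) with hTdef
  have hT : (0:ℝ) < T := Real.rpow_pos_of_pos hy _
  set C1 := x/T * (2*a') with hC1
  set C2 := x/T * (4*(lam+1)*b') with hC2
  have hhInt : IntervalIntegrable
      (fun θ => C1 * Real.sin θ ^ (2*lam-1) - C2 * (Real.sin θ ^ (2*lam-1) * Real.cos θ ^ 2))
      volume 0 (π/2) :=
    ((wHalfInt hlam).const_mul C1).sub ((wc2Int hlam).const_mul C2)
  have hmono : (∫ θ in (0:ℝ)..(π/2), (f θ + f (π - θ)))
      ≤ ∫ θ in (0:ℝ)..(π/2),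
          (C1 * Real.sin θ ^ (2*lam-1) - C2 * (Real.sin θ ^ (2*lam-1) * Real.cos θ ^ 2)) := by
    apply intervalIntegral.integral_mono_on (by positivity) (h1.add hrefl) hhInt
    intro θ hθ
    have hc0 : 0 ≤ Real.cos θ := Real.cos_nonneg_of_mem_Icc ⟨by linarith [hθ.1], hθ.2⟩
    have hc1 : Real.cos θ ≤ 1 := Real.cos_le_one θ
    have hs0 : 0 ≤ Real.sin θ :=
      Real.sin_nonneg_of_nonneg_of_le_pi hθ.1 (by linarith [hθ.2])
    have hw : 0 ≤ Real.sin θ ^ (2*lam-1) := Real.rpow_nonneg hs0 _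
    have key := core_ineq hlam hK2 hx hy hKxy hc0 hc1
    have erefl : f (π - θ) = (x + y*Real.cos θ) * Real.sin θ ^ (2*lam-1) /
        ((x^2 + y^2 + 2*x*y*Real.cos θ) ^ (lam+1)) := by
      rw [hfdef]
      simp only [Real.cos_pi_sub, Real.sin_pi_sub]
      ring_nf
    have hsum2 : f θ + f (π - θ) = Real.sin θ ^ (2*lam-1) *
        ((x - y*Real.cos θ) / ((x^2 + y^2 - 2*x*y*Real.cos θ) ^ (lam+1))
          + (x + y*Real.cos θ) / ((x^2 + y^2 + 2*x*y*Real.cos θ) ^ (lam+1))) := by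
      rw [erefl, hfdef]
      ring
    rw [hsum2]
    calc Real.sin θ ^ (2*lam-1) *
        ((x - y*Real.cos θ) / ((x^2 + y^2 - 2*x*y*Real.cos θ) ^ (lam+1))
          + (x + y*Real.cos θ) / ((x^2 + y^2 + 2*x*y*Real.cos θ) ^ (lam+1)))
        ≤ Real.sin θ ^ (2*lam-1) *
          (x / y^(2*lam+2) * (2*a' - 4*(lam+1)*b'*Real.cos θ^2)) :=
          mul_le_mul_of_nonneg_left key hw
      _ = C1 * Real.sin θ ^ (2*lam-1) - C2 * (Real.sin θ ^ (2*lam-1) * Real.cos θ ^ 2) := by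
          rw [hC1, hC2, hTdef]; ring
  have hIval : (∫ θ in (0:ℝ)..(π/2),
        (C1 * Real.sin θ ^ (2*lam-1) - C2 * (Real.sin θ ^ (2*lam-1) * Real.cos θ ^ 2)))
      = C1 * I₀ - C2 * I₂ := by
    rw [intervalIntegral.integral_sub ((wHalfInt hlam).const_mul C1)
      ((wc2Int hlam).const_mul C2), intervalIntegral.integral_const_mul,
      intervalIntegral.integral_const_mul]
  have hfinal : (∫ θ in (0:ℝ)..π, f θ) ≤ -(x/T * (I₀ * δ)) := by
    rw [hsum]
    refine hmono.trans (le_of_eq ?_)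
    rw [hIval, hI2val, hC1, hC2, hδdef]
    field_simp
    ring
  have hkernel : rieszKernel lam x y = -(2*lam/π) * ∫ θ in (0:ℝ)..π, f θ := by
    rw [rieszKernel, hfdef]
  have h2lpi : (0:ℝ) < 2*lam/π := by positivity
  have hmul := mul_le_mul_of_nonneg_left hfinal h2lpi.le
  rw [hkernel]
  have egoal : 2*lam/π * (I₀ * δ) * x / T = 2*lam/π * (x/T * (I₀ * δ)) := by ring
  rw [hTdef] at egoal
  rw [egoal]
  nlinarith [hmul]
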